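/- arXiv:1311.6402 — 4 statements merged into one kernel-verified Lean document; each statement's English description precedes it below -/
import Mathlib

section
/- Let P₁, Q₁ be complex matrices of compatible sizes, δ₁ ≥ 0, and u a vector. Then max over all matrices Z₁ with spectral norm ‖Z₁‖ ≤ δ₁ of 2·Re(u^H P₁^H Z₁ Q₁ u) equals 2 δ₁ ‖P₁ u‖ ‖Q₁ u‖. -/
open Matrix

lemma sqrt_sum_normSq {n : ℕ} (x : Fin n → ℂ) :
    Real.sqrt (∑ i, Complex.normSq (x i)) = ‖(WithLp.equiv 2 (Fin n → ℂ)).symm x‖ := by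
  rw [EuclideanSpace.norm_eq]
  congr 1
  refine Finset.sum_congr rfl fun i _ => ?_
  simp [Complex.normSq_eq_norm_sq]

lemma cs {n : ℕ} (x y : Fin n → ℂ) :
    ‖star x ⬝ᵥ y‖ ≤ Real.sqrt (∑ i, Complex.normSq (x i)) * Real.sqrt (∑ i, Complex.normSq (y i)) := by
  have h := norm_inner_le_norm (𝕜 := ℂ) ((WithLp.equiv 2 (Fin n → ℂ)).symm x)
      ((WithLp.equiv 2 (Fin n → ℂ)).symm y)
  change ‖y ⬝ᵥ star x‖ ≤ _ at h
  rw [dotProduct_comm] at h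
  rw [sqrt_sum_normSq, sqrt_sum_normSq]
  exact h

/-- `‖A‖ ≤ δ` in the spectral (operator) norm, encoded as
`‖A v‖ ≤ δ ‖v‖` for all `v` (squared form). -/
def specNormLe {p q : ℕ} (δ : ℝ) (A : Matrix (Fin p) (Fin q) ℂ) : Prop :=
  ∀ v : Fin q → ℂ, ∑ i, Complex.normSq ((A *ᵥ v) i) ≤ δ ^ 2 * ∑ j, Complex.normSq (v j)

/-- The maximum of `2 Re(uᴴ P₁ᴴ Z₁ Q₁ u)` over all `Z₁` with spectral norm `≤ δ₁`
equals `2 δ₁ ‖P₁ u‖ ‖Q₁ u‖`. -/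
theorem stmt_6 (p q k : ℕ) (P₁ : Matrix (Fin p) (Fin k) ℂ) (Q₁ : Matrix (Fin q) (Fin k) ℂ)
    (u : Fin k → ℂ) (δ₁ : ℝ) (hδ₁ : 0 ≤ δ₁) :
    IsGreatest {r : ℝ | ∃ Z₁ : Matrix (Fin p) (Fin q) ℂ, specNormLe δ₁ Z₁ ∧
        r = 2 * (star u ⬝ᵥ ((P₁ᴴ * Z₁ * Q₁) *ᵥ u)).re}
      (2 * δ₁ * Real.sqrt (∑ i, Complex.normSq ((P₁ *ᵥ u) i)) *
        Real.sqrt (∑ i, Complex.normSq ((Q₁ *ᵥ u) i))) := by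
  set a : Fin p → ℂ := P₁ *ᵥ u with ha
  set b : Fin q → ℂ := Q₁ *ᵥ u with hb
  set Na : ℝ := ∑ i, Complex.normSq (a i) with hNa
  set Nb : ℝ := ∑ i, Complex.normSq (b i) with hNb
  have hNa0 : 0 ≤ Na := Finset.sum_nonneg fun i _ => Complex.normSq_nonneg _
  have hNb0 : 0 ≤ Nb := Finset.sum_nonneg fun i _ => Complex.normSq_nonneg _
  have key : ∀ Z : Matrix (Fin p) (Fin q) ℂ,
      star u ⬝ᵥ ((P₁ᴴ * Z * Q₁) *ᵥ u) = star a ⬝ᵥ (Z *ᵥ b) := by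
    intro Z
    rw [← Matrix.mulVec_mulVec, ← Matrix.mulVec_mulVec, Matrix.dotProduct_mulVec,
      ← Matrix.star_mulVec, ha, hb]
  constructor
  · -- membership
    by_cases h0 : δ₁ * Real.sqrt Na * Real.sqrt Nb = 0
    · refine ⟨0, ?_, ?_⟩
      · intro v
        simp only [Matrix.zero_mulVec, Pi.zero_apply, Complex.normSq_zero,
          Finset.sum_const_zero]
        exact mul_nonneg (sq_nonneg _) (Finset.sum_nonneg fun j _ => Complex.normSq_nonneg _)
      · simp only [Matrix.mul_zero, Matrix.zero_mul, Matrix.zero_mulVec,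
          dotProduct_zero, Complex.zero_re, mul_zero]
        linarith [mul_eq_zero.mp h0]
    · have hd : δ₁ ≠ 0 := fun h => h0 (by rw [h]; ring)
      have hsa : Real.sqrt Na ≠ 0 := fun h => h0 (by rw [h]; ring)
      have hsb : Real.sqrt Nb ≠ 0 := fun h => h0 (by rw [h]; ring)
      have hsa0 : 0 < Real.sqrt Na := lt_of_le_of_ne (Real.sqrt_nonneg _) (Ne.symm hsa)
      have hsb0 : 0 < Real.sqrt Nb := lt_of_le_of_ne (Real.sqrt_nonneg _) (Ne.symm hsb)
      have hNa' : Na = Real.sqrt Na ^ 2 := (Real.sq_sqrt hNa0).symm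
      have hNb' : Nb = Real.sqrt Nb ^ 2 := (Real.sq_sqrt hNb0).symm
      set c : ℝ := δ₁ / (Real.sqrt Na * Real.sqrt Nb) with hc
      refine ⟨Matrix.of fun i j => (c : ℂ) * a i * (starRingEnd ℂ) (b j), ?_, ?_⟩
      · intro v
        have hZv : ∀ i, ((Matrix.of fun i j => (c : ℂ) * a i * (starRingEnd ℂ) (b j)) *ᵥ v) i
            = (c : ℂ) * a i * (star b ⬝ᵥ v) := by
          intro i
          simp [Matrix.mulVec, dotProduct, Finset.mul_sum, mul_assoc]
        have hterm : ∀ i, Complex.normSq (((Matrix.of fun i j =>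
            (c : ℂ) * a i * (starRingEnd ℂ) (b j)) *ᵥ v) i)
            = c ^ 2 * Complex.normSq (a i) * Complex.normSq (star b ⬝ᵥ v) := by
          intro i
          rw [hZv, Complex.normSq_mul, Complex.normSq_mul, Complex.normSq_ofReal]
          ring
        have hsum : ∑ i, Complex.normSq (((Matrix.of fun i j =>
            (c : ℂ) * a i * (starRingEnd ℂ) (b j)) *ᵥ v) i)
            = c ^ 2 * Complex.normSq (star b ⬝ᵥ v) * Na := by
          rw [Finset.sum_congr rfl fun i _ => hterm i, ← Finset.sum_mul, ← Finset.mul_sum,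
            hNa]
          ring
        rw [hsum]
        have hcs : Complex.normSq (star b ⬝ᵥ v)
            ≤ Nb * ∑ j, Complex.normSq (v j) := by
          have h1 := cs b v
          have h2 : Complex.normSq (star b ⬝ᵥ v) = ‖star b ⬝ᵥ v‖ ^ 2 := by
            simp [Complex.normSq_eq_norm_sq]
          rw [h2]
          calc ‖star b ⬝ᵥ v‖ ^ 2
              ≤ (Real.sqrt Nb * Real.sqrt (∑ j, Complex.normSq (v j))) ^ 2 := by
                apply pow_le_pow_left₀ (norm_nonneg _) h1
            _ = Nb * ∑ j, Complex.normSq (v j) := by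
                rw [mul_pow, Real.sq_sqrt hNb0, Real.sq_sqrt
                  (Finset.sum_nonneg fun j _ => Complex.normSq_nonneg _)]
        have hNan : Na ≠ 0 := fun h => hsa (by rw [h, Real.sqrt_zero])
        have hNbn : Nb ≠ 0 := fun h => hsb (by rw [h, Real.sqrt_zero])
        have hc2 : c ^ 2 * Na * Nb = δ₁ ^ 2 := by
          rw [hc, div_pow, mul_pow, Real.sq_sqrt hNa0, Real.sq_sqrt hNb0,
            div_mul_eq_mul_div, div_mul_eq_mul_div, div_eq_iff (mul_ne_zero hNan hNbn)]
          ring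
        calc c ^ 2 * Complex.normSq (star b ⬝ᵥ v) * Na
            ≤ c ^ 2 * (Nb * ∑ j, Complex.normSq (v j)) * Na := by
              have : 0 ≤ c ^ 2 * Na := by positivity
              nlinarith [sq_nonneg c, hNa0]
          _ = δ₁ ^ 2 * ∑ j, Complex.normSq (v j) := by
              rw [← hc2]; ring
      · rw [key]
        have hZb : ∀ i, ((Matrix.of fun i j => (c : ℂ) * a i * (starRingEnd ℂ) (b j)) *ᵥ b) i
            = (c : ℂ) * a i * (star b ⬝ᵥ b) := by
          intro i
          simp [Matrix.mulVec, dotProduct, Finset.mul_sum, mul_assoc]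
        have hbb : star b ⬝ᵥ b = (Nb : ℂ) := by
          simp only [dotProduct, Pi.star_apply, hNb]
          push_cast
          refine Finset.sum_congr rfl fun i _ => ?_
          rw [Complex.normSq_eq_conj_mul_self]
          rfl
        have haa : star a ⬝ᵥ a = (Na : ℂ) := by
          simp only [dotProduct, Pi.star_apply, hNa]
          push_cast
          refine Finset.sum_congr rfl fun i _ => ?_
          rw [Complex.normSq_eq_conj_mul_self]
          rfl
        have hvec : ((Matrix.of fun i j => (c : ℂ) * a i * (starRingEnd ℂ) (b j)) *ᵥ b)
            = ((c : ℂ) * (Nb : ℂ)) • a := by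
          funext i
          rw [Pi.smul_apply, smul_eq_mul, hZb, hbb]
          ring
        have hdot : star a ⬝ᵥ ((Matrix.of fun i j =>
            (c : ℂ) * a i * (starRingEnd ℂ) (b j)) *ᵥ b)
            = (c : ℂ) * (Na : ℝ) * (Nb : ℝ) := by
          rw [hvec, dotProduct_smul, haa, smul_eq_mul]
          ring
        rw [hdot]
        have hcast : ((c : ℂ) * (Na : ℝ) * (Nb : ℝ)) = ((c * Na * Nb : ℝ) : ℂ) := by
          push_cast; ring
        rw [hcast, Complex.ofReal_re]
        have hne : Real.sqrt Na * Real.sqrt Nb ≠ 0 := mul_ne_zero hsa hsb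
        have hval : c * Na * Nb = δ₁ * Real.sqrt Na * Real.sqrt Nb := by
          rw [hc, div_mul_eq_mul_div, div_mul_eq_mul_div, div_eq_iff hne]
          linear_combination (-δ₁ * Nb) * Real.mul_self_sqrt hNa0 +
            (-δ₁ * Real.sqrt Na * Real.sqrt Na) * Real.mul_self_sqrt hNb0
        linarith [hval]
  · -- upper bound
    rintro r ⟨Z, hZ, rfl⟩
    rw [key]
    have h1 : (star a ⬝ᵥ (Z *ᵥ b)).re ≤ ‖star a ⬝ᵥ (Z *ᵥ b)‖ :=
      Complex.re_le_norm _
    have h2 := cs a (Z *ᵥ b)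
    have h3 : Real.sqrt (∑ i, Complex.normSq ((Z *ᵥ b) i)) ≤ δ₁ * Real.sqrt Nb := by
      have := hZ b
      calc Real.sqrt (∑ i, Complex.normSq ((Z *ᵥ b) i))
          ≤ Real.sqrt (δ₁ ^ 2 * Nb) := Real.sqrt_le_sqrt this
        _ = δ₁ * Real.sqrt Nb := by
            rw [Real.sqrt_mul (sq_nonneg _), Real.sqrt_sq hδ₁]
    have h4 : (star a ⬝ᵥ (Z *ᵥ b)).re ≤ Real.sqrt Na * (δ₁ * Real.sqrt Nb) := by
      calc (star a ⬝ᵥ (Z *ᵥ b)).re ≤ ‖star a ⬝ᵥ (Z *ᵥ b)‖ := h1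
        _ ≤ Real.sqrt Na * Real.sqrt (∑ i, Complex.normSq ((Z *ᵥ b) i)) := h2
        _ ≤ Real.sqrt Na * (δ₁ * Real.sqrt Nb) := by
            apply mul_le_mul_of_nonneg_left h3 (Real.sqrt_nonneg _)
    linarith
end

section
/- Let H ∈ ℂ^{m×n} have full column rank, y ∈ ℂ^m, P = I − HH⁺. Then the Fréchet derivative of the map H̃ ↦ y^H (I − H̃ H̃⁺) y at H̃ = H, applied to a perturbation ΔH ∈ ℂ^{m×n}, equals −2 Re( (H⁺y)^H (ΔH)^H P y ) = 2 Re( Tr( (−P y (H⁺y)^H)^H ΔH ) ); equivalently the matrix gradient is D = −P y (H⁺ y)^H. -/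
open Matrix
open scoped ComplexOrder

attribute [local instance] Matrix.normedAddCommGroup Matrix.normedSpace

namespace Stmt13Aux

noncomputable section

/-- Matrix multiplication as a continuous ℝ-bilinear map (entrywise sup norm). -/
def mulCLM (p q r : ℕ) :
    Matrix (Fin p) (Fin q) ℂ →L[ℝ] Matrix (Fin q) (Fin r) ℂ →L[ℝ] Matrix (Fin p) (Fin r) ℂ :=
  LinearMap.mkContinuous₂
    (LinearMap.mk₂ ℝ (fun A B => A * B)
      (fun A A' B => Matrix.add_mul A A' B)
      (fun c A B => Matrix.smul_mul c A B)
      (fun A B B' => Matrix.mul_add A B B')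
      (fun c A B => Matrix.mul_smul A c B))
    q
    (by
      intro A B
      rw [LinearMap.mk₂_apply, Matrix.norm_le_iff (by positivity)]
      intro i j
      calc ‖(A * B) i j‖ = ‖∑ k, A i k * B k j‖ := by rw [Matrix.mul_apply]
        _ ≤ ∑ k, ‖A i k * B k j‖ := norm_sum_le _ _
        _ ≤ ∑ _k : Fin q, ‖A‖ * ‖B‖ := by
            refine Finset.sum_le_sum fun k _ => ?_
            rw [norm_mul]
            exact mul_le_mul (A.norm_entry_le_entrywise_sup_norm)
              (B.norm_entry_le_entrywise_sup_norm) (norm_nonneg _) (norm_nonneg _)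
        _ = (q : ℝ) * ‖A‖ * ‖B‖ := by
            simp [Finset.sum_const]
            ring)

@[simp] lemma mulCLM_apply {p q r : ℕ} (A : Matrix (Fin p) (Fin q) ℂ)
    (B : Matrix (Fin q) (Fin r) ℂ) : mulCLM p q r A B = A * B := rfl

lemma hasFDerivAt_mul {p q r : ℕ} {X : Type*} [NormedAddCommGroup X] [NormedSpace ℝ X]
    {f : X → Matrix (Fin p) (Fin q) ℂ} {g : X → Matrix (Fin q) (Fin r) ℂ}
    {f' : X →L[ℝ] Matrix (Fin p) (Fin q) ℂ} {g' : X →L[ℝ] Matrix (Fin q) (Fin r) ℂ} {x : X}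
    (hf : HasFDerivAt f f' x) (hg : HasFDerivAt g g' x) :
    HasFDerivAt (fun x => f x * g x)
      (((mulCLM p q r).isBoundedBilinearMap.deriv (f x, g x)).comp (f'.prod g')) x :=
  by have := ((mulCLM p q r).isBoundedBilinearMap.hasFDerivAt (f x, g x)).comp x (hf.prodMk hg); exact this

/-- Conjugate transpose as a continuous ℝ-linear map. -/
def ctCLM (p q : ℕ) : Matrix (Fin p) (Fin q) ℂ →L[ℝ] Matrix (Fin q) (Fin p) ℂ :=
  LinearMap.toContinuousLinearMap
    { toFun := fun M => Mᴴ
      map_add' := fun A B => Matrix.conjTranspose_add A B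
      map_smul' := fun c A => by
        ext i j
        simp [Matrix.conjTranspose_apply, star_smul] }

@[simp] lemma ctCLM_apply {p q : ℕ} (A : Matrix (Fin p) (Fin q) ℂ) : ctCLM p q A = Aᴴ := rfl

/-- `G ↦ Re (yᴴ G y)` as a continuous ℝ-linear map. -/
def phiCLM (m : ℕ) (y : Fin m → ℂ) : Matrix (Fin m) (Fin m) ℂ →L[ℝ] ℝ :=
  LinearMap.toContinuousLinearMap
    { toFun := fun G => (star y ⬝ᵥ (G *ᵥ y)).re
      map_add' := fun A B => by simp [Matrix.add_mulVec]
      map_smul' := fun c A => by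
        simp [Matrix.smul_mulVec, Complex.smul_re] }

@[simp] lemma phiCLM_apply {m : ℕ} (y : Fin m → ℂ) (G : Matrix (Fin m) (Fin m) ℂ) :
    phiCLM m y G = (star y ⬝ᵥ (G *ᵥ y)).re := rfl

/-- The entry map as a continuous ℝ-linear map. -/
def entryCLM (p q : ℕ) (i : Fin p) (j : Fin q) : Matrix (Fin p) (Fin q) ℂ →L[ℝ] ℂ :=
  LinearMap.toContinuousLinearMap
    { toFun := fun A => A i j
      map_add' := fun _ _ => rfl
      map_smul' := fun _ _ => rfl }

lemma differentiable_finprod {X : Type*} [NormedAddCommGroup X] [NormedSpace ℝ X]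
    {ι : Type*} (s : Finset ι) (g : ι → X → ℂ) (hg : ∀ i, Differentiable ℝ (g i)) :
    Differentiable ℝ (fun x => ∏ i ∈ s, g i x) := by
  classical
  induction s using Finset.induction with
  | empty => simpa using differentiable_const (1 : ℂ)
  | insert _ _ hni ih =>
      simp only [Finset.prod_insert hni]
      exact (hg _).mul ih

lemma differentiable_det_comp {X : Type*} [NormedAddCommGroup X] [NormedSpace ℝ X]
    {q : ℕ} (f : X → Matrix (Fin q) (Fin q) ℂ)
    (hf : ∀ i j, Differentiable ℝ (fun x => f x i j)) :
    Differentiable ℝ (fun x => (f x).det) := by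
  have h : (fun x => (f x).det)
      = fun x => ∑ σ : Equiv.Perm (Fin q),
          (((Equiv.Perm.sign σ : ℤ) : ℂ)) * ∏ i, f x (σ i) i := by
    funext x
    rw [Matrix.det_apply']
  rw [h]
  exact Differentiable.fun_sum fun σ _ =>
    (differentiable_finprod _ _ fun i => hf (σ i) i).const_mul _

lemma differentiable_adjugate (k : ℕ) :
    Differentiable ℝ (fun A : Matrix (Fin k) (Fin k) ℂ => A.adjugate) := by
  intro A₀
  refine differentiableAt_pi.2 fun i => differentiableAt_pi.2 fun j => ?_
  have h : (fun A : Matrix (Fin k) (Fin k) ℂ => A.adjugate i j)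
      = fun A => (A.updateRow j (Pi.single i 1)).det := by
    funext A
    rw [Matrix.adjugate_apply]
  rw [h]
  refine (differentiable_det_comp _ ?_) A₀
  intro a b
  by_cases ha : a = j
  · subst ha
    simp only [Matrix.updateRow_self]
    exact differentiable_const _
  · have : (fun A : Matrix (Fin k) (Fin k) ℂ =>
        (A.updateRow j (Pi.single i 1)) a b) = fun A => A a b := by
      funext A
      rw [Matrix.updateRow_ne ha]
    rw [this]
    exact (entryCLM k k a b).differentiable

lemma differentiableAt_matrix_inv (k : ℕ) (A : Matrix (Fin k) (Fin k) ℂ)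
    (hA : A.det ≠ 0) :
    DifferentiableAt ℝ (fun X : Matrix (Fin k) (Fin k) ℂ => X⁻¹) A := by
  have h : (fun X : Matrix (Fin k) (Fin k) ℂ => X⁻¹)
      = fun X => (X.det)⁻¹ • X.adjugate := by
    funext X
    rw [Matrix.inv_def, Ring.inverse_eq_inv']
  rw [h]
  have hdet : DifferentiableAt ℝ (fun X : Matrix (Fin k) (Fin k) ℂ => X.det) A :=
    (differentiable_det_comp (fun X => X) fun i j => (entryCLM k k i j).differentiable) A
  exact (hdet.inv hA).smul ((differentiable_adjugate k) A)

lemma hasFDerivAt_matrix_inv (k : ℕ) (A : Matrix (Fin k) (Fin k) ℂ)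
    (hA : IsUnit A.det) :
    ∃ L₀ : Matrix (Fin k) (Fin k) ℂ →L[ℝ] Matrix (Fin k) (Fin k) ℂ,
      (∀ Δ, L₀ Δ = -(A⁻¹ * (Δ * A⁻¹))) ∧
      HasFDerivAt (fun X : Matrix (Fin k) (Fin k) ℂ => X⁻¹) L₀ A := by
  have hdet0 : A.det ≠ 0 := by
    intro h
    rw [h] at hA
    exact (by simpa using hA : IsUnit (0 : ℂ)).ne_zero rfl
  have hdiff := differentiableAt_matrix_inv k A hdet0
  set L₀ := fderiv ℝ (fun X : Matrix (Fin k) (Fin k) ℂ => X⁻¹) A with hL₀def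
  have h₀ : HasFDerivAt (fun X : Matrix (Fin k) (Fin k) ℂ => X⁻¹) L₀ A :=
    hdiff.hasFDerivAt
  -- derivative of X ↦ X * X⁻¹
  have hF : HasFDerivAt (fun X : Matrix (Fin k) (Fin k) ℂ => X * X⁻¹)
      (((mulCLM k k k).isBoundedBilinearMap.deriv (A, A⁻¹)).comp
        ((ContinuousLinearMap.id ℝ _).prod L₀)) A :=
    hasFDerivAt_mul (hasFDerivAt_id A) h₀
  -- X * X⁻¹ = 1 near A
  have hdetdiff : DifferentiableAt ℝ (fun X : Matrix (Fin k) (Fin k) ℂ => X.det) A :=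
    (differentiable_det_comp (fun X => X) fun i j => (entryCLM k k i j).differentiable) A
  have hev : (fun X : Matrix (Fin k) (Fin k) ℂ => X * X⁻¹) =ᶠ[nhds A] fun _ => 1 := by
    have hne : ∀ᶠ X in nhds A, (Matrix.det X) ≠ 0 :=
      hdetdiff.continuousAt.eventually_ne hdet0
    exact hne.mono fun X hX => Matrix.mul_nonsing_inv X (isUnit_iff_ne_zero.2 hX)
  have hconst : HasFDerivAt (fun _ : Matrix (Fin k) (Fin k) ℂ => (1 : Matrix (Fin k) (Fin k) ℂ))
      (((mulCLM k k k).isBoundedBilinearMap.deriv (A, A⁻¹)).comp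
        ((ContinuousLinearMap.id ℝ _).prod L₀)) A :=
    hF.congr_of_eventuallyEq hev.symm
  have hzero : (((mulCLM k k k).isBoundedBilinearMap.deriv (A, A⁻¹)).comp
      ((ContinuousLinearMap.id ℝ _).prod L₀)) = 0 :=
    hconst.unique (hasFDerivAt_const _ _)
  refine ⟨L₀, fun Δ => ?_, h₀⟩
  have h1 : A * L₀ Δ + Δ * A⁻¹ = 0 := by
    have := congrFun (congrArg (fun (T : _ →L[ℝ] _) => (T : _ → _)) hzero) Δ
    exact this
  have h2 : A * L₀ Δ = -(Δ * A⁻¹) := by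
    rw [add_eq_zero_iff_eq_neg] at h1
    exact h1
  calc L₀ Δ = (A⁻¹ * A) * L₀ Δ := by rw [Matrix.nonsing_inv_mul A hA, Matrix.one_mul]
    _ = A⁻¹ * (A * L₀ Δ) := by rw [Matrix.mul_assoc]
    _ = A⁻¹ * -(Δ * A⁻¹) := by rw [h2]
    _ = -(A⁻¹ * (Δ * A⁻¹)) := by rw [Matrix.mul_neg]

lemma star_dot_mulVec {m : ℕ} (y : Fin m → ℂ) (M : Matrix (Fin m) (Fin m) ℂ) :
    star (star y ⬝ᵥ (M *ᵥ y)) = star y ⬝ᵥ (Mᴴ *ᵥ y) := by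
  rw [Matrix.star_dotProduct, star_star, Matrix.star_mulVec, Matrix.dotProduct_mulVec]

lemma key_algebra {m n : ℕ} (H Δ : Matrix (Fin m) (Fin n) ℂ)
    (B : Matrix (Fin n) (Fin n) ℂ) (hBs : Bᴴ = B) (y : Fin m → ℂ) :
    (star y ⬝ᵥ ((-(H * (B * Δᴴ + -(B * ((Hᴴ * Δ + Δᴴ * H) * B)) * Hᴴ)
        + Δ * (B * Hᴴ))) *ᵥ y)).re
    = -2 * (star (Δ *ᵥ ((B * Hᴴ) *ᵥ y)) ⬝ᵥ ((1 - H * (B * Hᴴ)) *ᵥ y)).re := by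
  set W : Matrix (Fin m) (Fin m) ℂ := 1 - H * (B * Hᴴ) with hWdef
  have hWs : Wᴴ = W := by
    rw [hWdef, Matrix.conjTranspose_sub, Matrix.conjTranspose_one, Matrix.conjTranspose_mul,
      Matrix.conjTranspose_mul, Matrix.conjTranspose_conjTranspose, hBs, Matrix.mul_assoc]
  set Mc : Matrix (Fin m) (Fin m) ℂ := H * B * (Δᴴ * W) with hMcdef
  have hMcH : Mcᴴ = W * (Δ * (B * Hᴴ)) := by
    rw [hMcdef, Matrix.conjTranspose_mul, Matrix.conjTranspose_mul, Matrix.conjTranspose_mul,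
      Matrix.conjTranspose_conjTranspose, hBs, hWs, Matrix.mul_assoc]
  have hmat : -(H * (B * Δᴴ + -(B * ((Hᴴ * Δ + Δᴴ * H) * B)) * Hᴴ) + Δ * (B * Hᴴ))
      = -(Mc + Mcᴴ) := by
    rw [hMcH, hMcdef, hWdef]
    simp only [Matrix.mul_add, Matrix.add_mul, Matrix.mul_sub, Matrix.sub_mul,
      Matrix.mul_one, Matrix.one_mul, Matrix.neg_mul, Matrix.mul_neg, Matrix.mul_assoc]
    abel
  rw [hmat]
  have hc : star (Δ *ᵥ ((B * Hᴴ) *ᵥ y)) ⬝ᵥ (W *ᵥ y) = star y ⬝ᵥ (Mc *ᵥ y) := by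
    rw [Matrix.mulVec_mulVec, Matrix.star_mulVec, Matrix.dotProduct_mulVec,
      Matrix.vecMul_vecMul, ← Matrix.dotProduct_mulVec, hMcdef,
      Matrix.conjTranspose_mul, Matrix.conjTranspose_mul, Matrix.conjTranspose_conjTranspose,
      hBs, Matrix.mul_assoc, Matrix.mul_assoc]
  have hsplit : star y ⬝ᵥ ((-(Mc + Mcᴴ)) *ᵥ y)
      = -((star y ⬝ᵥ (Mc *ᵥ y)) + star (star y ⬝ᵥ (Mc *ᵥ y))) := by
    rw [Matrix.neg_mulVec, Matrix.add_mulVec, dotProduct_neg, dotProduct_add,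
      star_dot_mulVec]
  rw [hsplit, hc]
  have hstar_re : (star (star y ⬝ᵥ (Mc *ᵥ y))).re = (star y ⬝ᵥ (Mc *ᵥ y)).re := by
    simp [Complex.star_def]
  simp only [Complex.neg_re, Complex.add_re, hstar_re]
  ring

end

end Stmt13Aux

open Stmt13Aux

/-- Lemma 1 of the paper: the Fréchet derivative at `H` of the map
`H̃ ↦ yᴴ (I - H̃ H̃⁺) y` applied to `ΔH` equals `-2 Re((H⁺y)ᴴ (ΔH)ᴴ P y)`;
equivalently the matrix gradient is `D = -P y (H⁺ y)ᴴ`. -/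
theorem stmt_13 (m n : ℕ) (hmn : n ≤ m) (H : Matrix (Fin m) (Fin n) ℂ)
    (hrank : H.rank = n) (y : Fin m → ℂ) :
    ∃ L : Matrix (Fin m) (Fin n) ℂ →L[ℝ] ℝ,
      (∀ ΔH : Matrix (Fin m) (Fin n) ℂ,
        L ΔH = -2 * (star (ΔH *ᵥ (((Hᴴ * H)⁻¹ * Hᴴ) *ᵥ y)) ⬝ᵥ
          ((1 - H * ((Hᴴ * H)⁻¹ * Hᴴ)) *ᵥ y)).re) ∧
      HasFDerivAt
        (fun M : Matrix (Fin m) (Fin n) ℂ =>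
          (star y ⬝ᵥ ((1 - M * ((Mᴴ * M)⁻¹ * Mᴴ)) *ᵥ y)).re)
        L H := by
  classical
  have hrank2 : (Hᴴ * H).rank = n := by
    rw [Matrix.rank_conjTranspose_mul_self, hrank]
  have hunit : IsUnit (Hᴴ * H) := by
    rw [← Matrix.mulVec_injective_iff_isUnit]
    have hsurj : Function.Surjective (Hᴴ * H).mulVecLin := by
      rw [← LinearMap.range_eq_top]
      apply Submodule.eq_top_of_finrank_eq
      rw [show Module.finrank ℂ (LinearMap.range (Hᴴ * H).mulVecLin) = (Hᴴ * H).rank from rfl,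
        hrank2]
      simp
    have hinj : Function.Injective (Hᴴ * H).mulVecLin :=
      (LinearMap.injective_iff_surjective).2 hsurj
    intro u v huv
    exact hinj (by simpa [Matrix.mulVecLin_apply] using huv)
  have hdetu : IsUnit (Hᴴ * H).det := (Matrix.isUnit_iff_isUnit_det _).1 hunit
  obtain ⟨L₀, hL₀, hinv⟩ := hasFDerivAt_matrix_inv n (Hᴴ * H) hdetu
  have h1 : HasFDerivAt (fun M : Matrix (Fin m) (Fin n) ℂ => Mᴴ) (ctCLM m n) H :=
    (ctCLM m n).hasFDerivAt
  have h2 : HasFDerivAt (fun M : Matrix (Fin m) (Fin n) ℂ => Mᴴ * M)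
      (((mulCLM n m n).isBoundedBilinearMap.deriv (Hᴴ, H)).comp
        ((ctCLM m n).prod (ContinuousLinearMap.id ℝ _))) H :=
    hasFDerivAt_mul h1 (hasFDerivAt_id H)
  have h3 : HasFDerivAt (fun M : Matrix (Fin m) (Fin n) ℂ => (Mᴴ * M)⁻¹)
      (L₀.comp (((mulCLM n m n).isBoundedBilinearMap.deriv (Hᴴ, H)).comp
        ((ctCLM m n).prod (ContinuousLinearMap.id ℝ _)))) H :=
    HasFDerivAt.comp H hinv h2
  have h4 : HasFDerivAt (fun M : Matrix (Fin m) (Fin n) ℂ => (Mᴴ * M)⁻¹ * Mᴴ)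
      (((mulCLM n n m).isBoundedBilinearMap.deriv ((Hᴴ * H)⁻¹, Hᴴ)).comp
        ((L₀.comp (((mulCLM n m n).isBoundedBilinearMap.deriv (Hᴴ, H)).comp
          ((ctCLM m n).prod (ContinuousLinearMap.id ℝ _)))).prod (ctCLM m n))) H :=
    hasFDerivAt_mul h3 h1
  have h5 : HasFDerivAt (fun M : Matrix (Fin m) (Fin n) ℂ => M * ((Mᴴ * M)⁻¹ * Mᴴ))
      (((mulCLM m n m).isBoundedBilinearMap.deriv (H, (Hᴴ * H)⁻¹ * Hᴴ)).comp
        ((ContinuousLinearMap.id ℝ _).prod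
          (((mulCLM n n m).isBoundedBilinearMap.deriv ((Hᴴ * H)⁻¹, Hᴴ)).comp
            ((L₀.comp (((mulCLM n m n).isBoundedBilinearMap.deriv (Hᴴ, H)).comp
              ((ctCLM m n).prod (ContinuousLinearMap.id ℝ _)))).prod (ctCLM m n))))) H :=
    hasFDerivAt_mul (hasFDerivAt_id H) h4
  set L5 := ((mulCLM m n m).isBoundedBilinearMap.deriv (H, (Hᴴ * H)⁻¹ * Hᴴ)).comp
        ((ContinuousLinearMap.id ℝ _).prod
          (((mulCLM n n m).isBoundedBilinearMap.deriv ((Hᴴ * H)⁻¹, Hᴴ)).comp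
            ((L₀.comp (((mulCLM n m n).isBoundedBilinearMap.deriv (Hᴴ, H)).comp
              ((ctCLM m n).prod (ContinuousLinearMap.id ℝ _)))).prod (ctCLM m n)))) with hL5def
  have h6 : HasFDerivAt (fun M : Matrix (Fin m) (Fin n) ℂ =>
      (1 : Matrix (Fin m) (Fin m) ℂ) - M * ((Mᴴ * M)⁻¹ * Mᴴ)) (0 - L5) H :=
    (hasFDerivAt_const _ _).sub h5
  have h7 : HasFDerivAt
      (fun M : Matrix (Fin m) (Fin n) ℂ =>
        (star y ⬝ᵥ ((1 - M * ((Mᴴ * M)⁻¹ * Mᴴ)) *ᵥ y)).re)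
      ((phiCLM m y).comp (0 - L5)) H :=
    ((phiCLM m y).hasFDerivAt).comp H h6
  refine ⟨(phiCLM m y).comp (0 - L5), fun Δ => ?_, h7⟩
  have heval : ((phiCLM m y).comp (0 - L5)) Δ
      = (star y ⬝ᵥ ((-(H * ((Hᴴ * H)⁻¹ * Δᴴ
            + -((Hᴴ * H)⁻¹ * ((Hᴴ * Δ + Δᴴ * H) * (Hᴴ * H)⁻¹)) * Hᴴ)
          + Δ * ((Hᴴ * H)⁻¹ * Hᴴ))) *ᵥ y)).re := by
    have hs : (0 - L5) Δ = -(L5 Δ) := by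
      rw [ContinuousLinearMap.sub_apply, ContinuousLinearMap.zero_apply, zero_sub]
    have hL5 : L5 Δ = H * ((Hᴴ * H)⁻¹ * Δᴴ + L₀ (Hᴴ * Δ + Δᴴ * H) * Hᴴ)
        + Δ * ((Hᴴ * H)⁻¹ * Hᴴ) := rfl
    rw [ContinuousLinearMap.comp_apply]
    erw [hs]
    rw [hL5, hL₀, phiCLM_apply]
  rw [heval]
  have := key_algebra H Δ ((Hᴴ * H)⁻¹) (by
    rw [Matrix.conjTranspose_nonsing_inv, Matrix.conjTranspose_mul,
      Matrix.conjTranspose_conjTranspose]) y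
  exact this
end

section
/- Let N be Hermitian, P₁ ∈ ℂ^{p×k}, Q₁ ∈ ℂ^{q×k}, δ ≥ 0. If there exists τ ≥ 0 such that the block matrix [[N − τ Q₁^H Q₁, −δ P₁^H],[−δ P₁, τ I]] is positive semidefinite, then N ⪰ P₁^H Z Q₁ + Q₁^H Z^H P₁ for every Z with spectral norm ‖Z‖ ≤ δ. -/
open Matrix
open scoped ComplexOrder

lemma dot_star_self_cast {n : ℕ} (w : Fin n → ℂ) :
    star w ⬝ᵥ w = ((∑ i, Complex.normSq (w i) : ℝ) : ℂ) := by
  simp [dotProduct, Complex.normSq_eq_conj_mul_self]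

/-- Sufficiency direction of the one-constraint S-procedure LMI: if
`[[N - τ Q₁ᴴQ₁, -δ P₁ᴴ], [-δ P₁, τ I]] ⪰ 0` for some `τ ≥ 0`, then
`N ⪰ P₁ᴴ Z Q₁ + Q₁ᴴ Zᴴ P₁` for every `Z` with `‖Z‖ ≤ δ`. -/
theorem stmt_15 (p q k : ℕ) (N : Matrix (Fin k) (Fin k) ℂ) (hN : N.IsHermitian)
    (P₁ : Matrix (Fin p) (Fin k) ℂ) (Q₁ : Matrix (Fin q) (Fin k) ℂ)
    (δ : ℝ) (hδ : 0 ≤ δ) (τ : ℝ) (hτ : 0 ≤ τ)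
    (hLMI : (Matrix.fromBlocks (N - (τ : ℂ) • (Q₁ᴴ * Q₁)) (-(δ : ℂ) • P₁ᴴ)
        (-(δ : ℂ) • P₁) ((τ : ℂ) • 1)).PosSemidef) :
    ∀ Z : Matrix (Fin p) (Fin q) ℂ, specNormLe δ Z →
      (N - (P₁ᴴ * Z * Q₁ + Q₁ᴴ * Zᴴ * P₁)).PosSemidef := by
  intro Z hZ
  refine .of_dotProduct_mulVec_nonneg ?_ fun x => ?_
  · unfold Matrix.IsHermitian
    simp [conjTranspose_sub, conjTranspose_add, conjTranspose_mul, hN.eq, Matrix.mul_assoc,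
      add_comm]
  · -- notation (plain abbreviations, not `set`)
    have hw0 : δ = 0 → Z *ᵥ (Q₁ *ᵥ x) = 0 := by
      intro h0
      have h := hZ (Q₁ *ᵥ x)
      rw [h0] at h
      simp only [ne_eq, OfNat.ofNat_ne_zero, not_false_eq_true, zero_pow, zero_mul] at h
      funext i
      have hnn : ∀ j ∈ Finset.univ, (0:ℝ) ≤ Complex.normSq ((Z *ᵥ (Q₁ *ᵥ x)) j) := fun j _ =>
        Complex.normSq_nonneg _
      have h1 := (Finset.sum_eq_zero_iff_of_nonneg hnn).mp
        (le_antisymm h (Finset.sum_nonneg hnn)) i (Finset.mem_univ i)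
      simpa using Complex.normSq_eq_zero.mp h1
    have hkey : ((δ:ℂ) * ((δ⁻¹:ℝ):ℂ)) • (Z *ᵥ (Q₁ *ᵥ x)) = Z *ᵥ (Q₁ *ᵥ x) := by
      rcases eq_or_ne δ 0 with h0 | h0
      · simp [hw0 h0]
      · have : (δ:ℂ) * ((δ⁻¹:ℝ):ℂ) = 1 := by push_cast; field_simp
        rw [this, one_smul]
    have hbb : (δ:ℂ) * ((δ⁻¹:ℝ):ℂ) * (star x ⬝ᵥ (P₁ᴴ *ᵥ (Z *ᵥ (Q₁ *ᵥ x))))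
        = star x ⬝ᵥ (P₁ᴴ *ᵥ (Z *ᵥ (Q₁ *ᵥ x))) := by
      conv_rhs => rw [← hkey]
      rw [mulVec_smul, dotProduct_smul, smul_eq_mul]
    have hcc : (δ:ℂ) * ((δ⁻¹:ℝ):ℂ) * (star (Z *ᵥ (Q₁ *ᵥ x)) ⬝ᵥ (P₁ *ᵥ x))
        = star (Z *ᵥ (Q₁ *ᵥ x)) ⬝ᵥ (P₁ *ᵥ x) := by
      conv_rhs => rw [← hkey]
      rw [star_smul, smul_dotProduct, smul_eq_mul]
      simp [Complex.conj_ofReal]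
    have hgoal : star x ⬝ᵥ ((N - (P₁ᴴ * Z * Q₁ + Q₁ᴴ * Zᴴ * P₁)) *ᵥ x)
        = star x ⬝ᵥ (N *ᵥ x) - star x ⬝ᵥ (P₁ᴴ *ᵥ (Z *ᵥ (Q₁ *ᵥ x)))
          - star (Z *ᵥ (Q₁ *ᵥ x)) ⬝ᵥ (P₁ *ᵥ x) := by
      rw [sub_mulVec, add_mulVec, dotProduct_sub, dotProduct_add]
      have e1 : star x ⬝ᵥ ((P₁ᴴ * Z * Q₁) *ᵥ x) = star x ⬝ᵥ (P₁ᴴ *ᵥ (Z *ᵥ (Q₁ *ᵥ x))) := by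
        rw [Matrix.mul_assoc, ← mulVec_mulVec, ← mulVec_mulVec]
      have e2 : star x ⬝ᵥ ((Q₁ᴴ * Zᴴ * P₁) *ᵥ x) = star (Z *ᵥ (Q₁ *ᵥ x)) ⬝ᵥ (P₁ *ᵥ x) := by
        have h1 : Q₁ᴴ * Zᴴ * P₁ = (Z * Q₁)ᴴ * P₁ := by rw [conjTranspose_mul]
        rw [h1, ← mulVec_mulVec, dotProduct_mulVec, ← star_mulVec, mulVec_mulVec]
      rw [e1, e2]; ring
    have hlmi : star (Sum.elim x (((δ⁻¹:ℝ):ℂ) • (Z *ᵥ (Q₁ *ᵥ x)))) ⬝ᵥ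
        ((Matrix.fromBlocks (N - (τ : ℂ) • (Q₁ᴴ * Q₁)) (-(δ : ℂ) • P₁ᴴ)
          (-(δ : ℂ) • P₁) ((τ : ℂ) • 1)) *ᵥ Sum.elim x (((δ⁻¹:ℝ):ℂ) • (Z *ᵥ (Q₁ *ᵥ x))))
        = star x ⬝ᵥ (N *ᵥ x) - (τ:ℂ) * (star (Q₁ *ᵥ x) ⬝ᵥ (Q₁ *ᵥ x))
          - (δ:ℂ) * ((δ⁻¹:ℝ):ℂ) * (star x ⬝ᵥ (P₁ᴴ *ᵥ (Z *ᵥ (Q₁ *ᵥ x))))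
          - (δ:ℂ) * ((δ⁻¹:ℝ):ℂ) * (star (Z *ᵥ (Q₁ *ᵥ x)) ⬝ᵥ (P₁ *ᵥ x))
          + (τ:ℂ) * ((δ⁻¹:ℝ):ℂ)^2 * (star (Z *ᵥ (Q₁ *ᵥ x)) ⬝ᵥ (Z *ᵥ (Q₁ *ᵥ x))) := by
      have hstarv : star (Sum.elim x (((δ⁻¹:ℝ):ℂ) • (Z *ᵥ (Q₁ *ᵥ x))))
          = Sum.elim (star x) (star (((δ⁻¹:ℝ):ℂ) • (Z *ᵥ (Q₁ *ᵥ x)))) := by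
        funext i; cases i <;> rfl
      rw [fromBlocks_mulVec, hstarv, sumElim_dotProduct_sumElim]
      simp only [Sum.elim_comp_inl, Sum.elim_comp_inr]
      have h2 : star x ⬝ᵥ (((τ : ℂ) • (Q₁ᴴ * Q₁)) *ᵥ x)
          = (τ:ℂ) * (star (Q₁ *ᵥ x) ⬝ᵥ (Q₁ *ᵥ x)) := by
        rw [smul_mulVec, dotProduct_smul, smul_eq_mul, ← mulVec_mulVec, dotProduct_mulVec,
          ← star_mulVec]
      rw [sub_mulVec, dotProduct_add, dotProduct_sub, h2, dotProduct_add]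
      have h3 : star x ⬝ᵥ ((-(δ : ℂ) • P₁ᴴ) *ᵥ (((δ⁻¹:ℝ):ℂ) • (Z *ᵥ (Q₁ *ᵥ x))))
          = -((δ:ℂ) * ((δ⁻¹:ℝ):ℂ) * (star x ⬝ᵥ (P₁ᴴ *ᵥ (Z *ᵥ (Q₁ *ᵥ x))))) := by
        rw [smul_mulVec, mulVec_smul, dotProduct_smul, dotProduct_smul]
        simp [smul_eq_mul]; ring
      have h4 : star (((δ⁻¹:ℝ):ℂ) • (Z *ᵥ (Q₁ *ᵥ x))) ⬝ᵥ ((-(δ : ℂ) • P₁) *ᵥ x)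
          = -((δ:ℂ) * ((δ⁻¹:ℝ):ℂ) * (star (Z *ᵥ (Q₁ *ᵥ x)) ⬝ᵥ (P₁ *ᵥ x))) := by
        rw [star_smul, smul_dotProduct, smul_mulVec, dotProduct_smul]
        simp [smul_eq_mul, Complex.conj_ofReal]; ring
      have h5 : star (((δ⁻¹:ℝ):ℂ) • (Z *ᵥ (Q₁ *ᵥ x))) ⬝ᵥ
          (((τ : ℂ) • (1:Matrix (Fin p) (Fin p) ℂ)) *ᵥ (((δ⁻¹:ℝ):ℂ) • (Z *ᵥ (Q₁ *ᵥ x))))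
          = (τ:ℂ) * ((δ⁻¹:ℝ):ℂ)^2 * (star (Z *ᵥ (Q₁ *ᵥ x)) ⬝ᵥ (Z *ᵥ (Q₁ *ᵥ x))) := by
        rw [star_smul, smul_dotProduct, smul_mulVec, mulVec_smul, one_mulVec,
          dotProduct_smul, dotProduct_smul]
        simp [smul_eq_mul, Complex.conj_ofReal]; ring
      rw [h3, h4, h5]; ring
    have h6 := hLMI.dotProduct_mulVec_nonneg (Sum.elim x (((δ⁻¹:ℝ):ℂ) • (Z *ᵥ (Q₁ *ᵥ x))))
    rw [hlmi] at h6
    have hres : 0 ≤ (τ:ℂ) * ((star (Q₁ *ᵥ x) ⬝ᵥ (Q₁ *ᵥ x))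
        - ((δ⁻¹:ℝ):ℂ)^2 * (star (Z *ᵥ (Q₁ *ᵥ x)) ⬝ᵥ (Z *ᵥ (Q₁ *ᵥ x)))) := by
      rw [dot_star_self_cast, dot_star_self_cast]
      have hcast : (τ:ℂ) * ((((∑ j, Complex.normSq ((Q₁ *ᵥ x) j) : ℝ)):ℂ)
          - ((δ⁻¹:ℝ):ℂ)^2 * (((∑ i, Complex.normSq ((Z *ᵥ (Q₁ *ᵥ x)) i) : ℝ)):ℂ))
          = ((τ * ((∑ j, Complex.normSq ((Q₁ *ᵥ x) j))
              - δ⁻¹^2 * ∑ i, Complex.normSq ((Z *ᵥ (Q₁ *ᵥ x)) i)) : ℝ) : ℂ) := by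
        push_cast; ring
      rw [hcast, Complex.zero_le_real]
      apply mul_nonneg hτ
      rw [sub_nonneg]
      rcases eq_or_ne δ 0 with h0 | h0
      · rw [hw0 h0]
        simp only [Pi.zero_apply, map_zero, Finset.sum_const_zero, mul_zero]
        exact Finset.sum_nonneg fun j _ => Complex.normSq_nonneg _
      · have h := hZ (Q₁ *ᵥ x)
        have hδ2 : 0 < δ^2 := by positivity
        rw [inv_pow]
        calc (δ^2)⁻¹ * ∑ i, Complex.normSq ((Z *ᵥ (Q₁ *ᵥ x)) i)
            ≤ (δ^2)⁻¹ * (δ^2 * ∑ j, Complex.normSq ((Q₁ *ᵥ x) j)) := by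
              apply mul_le_mul_of_nonneg_left h (by positivity)
          _ = ∑ j, Complex.normSq ((Q₁ *ᵥ x) j) := by field_simp
    rw [hgoal]
    have hfinal : star x ⬝ᵥ (N *ᵥ x) - star x ⬝ᵥ (P₁ᴴ *ᵥ (Z *ᵥ (Q₁ *ᵥ x)))
        - star (Z *ᵥ (Q₁ *ᵥ x)) ⬝ᵥ (P₁ *ᵥ x)
        = (star x ⬝ᵥ (N *ᵥ x) - (τ:ℂ) * (star (Q₁ *ᵥ x) ⬝ᵥ (Q₁ *ᵥ x))
          - (δ:ℂ) * ((δ⁻¹:ℝ):ℂ) * (star x ⬝ᵥ (P₁ᴴ *ᵥ (Z *ᵥ (Q₁ *ᵥ x))))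
          - (δ:ℂ) * ((δ⁻¹:ℝ):ℂ) * (star (Z *ᵥ (Q₁ *ᵥ x)) ⬝ᵥ (P₁ *ᵥ x))
          + (τ:ℂ) * ((δ⁻¹:ℝ):ℂ)^2 * (star (Z *ᵥ (Q₁ *ᵥ x)) ⬝ᵥ (Z *ᵥ (Q₁ *ᵥ x))))
        + (τ:ℂ) * ((star (Q₁ *ᵥ x) ⬝ᵥ (Q₁ *ᵥ x))
          - ((δ⁻¹:ℝ):ℂ)^2 * (star (Z *ᵥ (Q₁ *ᵥ x)) ⬝ᵥ (Z *ᵥ (Q₁ *ᵥ x)))) := by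
      linear_combination hbb + hcc
    rw [hfinal]
    exact add_nonneg h6 hres
end

section
/- Complex S-procedure (one constraint, losslessness): let F₀, F₁ be Hermitian matrices on ℂ^k and suppose there exists y₀ with y₀^H F₁ y₀ > 0. Then (y^H F₁ y ≥ 0 implies y^H F₀ y ≥ 0, for all y) if and only if there exists τ ≥ 0 with F₀ − τ F₁ ⪰ 0. -/
open Matrix
open scoped ComplexOrder

open Complex


private noncomputable def sqf {k : ℕ} (M : Matrix (Fin k) (Fin k) ℂ) (x y : Fin k → ℂ) : ℂ :=
  star x ⬝ᵥ (M *ᵥ y)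

private lemma sqf_conj {k : ℕ} {M : Matrix (Fin k) (Fin k) ℂ} (hM : M.IsHermitian)
    (x y : Fin k → ℂ) : starRingEnd ℂ (sqf M x y) = sqf M y x := by
  unfold sqf
  nth_rewrite 2 [← hM.eq]
  simp [dotProduct, mulVec, Matrix.conjTranspose_apply, Finset.mul_sum, Finset.sum_mul, map_sum]
  rw [Finset.sum_comm]
  congr 1; ext i; congr 1; ext j; ring

private lemma sqf_comb {k : ℕ} (M : Matrix (Fin k) (Fin k) ℂ) (c₁ c₂ d₁ d₂ : ℂ)
    (x y : Fin k → ℂ) :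
    sqf M (c₁ • x + c₂ • y) (d₁ • x + d₂ • y) =
      starRingEnd ℂ c₁ * d₁ * sqf M x x + starRingEnd ℂ c₁ * d₂ * sqf M x y
      + starRingEnd ℂ c₂ * d₁ * sqf M y x + starRingEnd ℂ c₂ * d₂ * sqf M y y := by
  simp [sqf, mulVec_add, mulVec_smul, dotProduct_add, dotProduct_smul, star_add, star_smul,
    add_dotProduct, smul_dotProduct, smul_eq_mul]
  ring

private lemma rotate_sum {k : ℕ} (M : Matrix (Fin k) (Fin k) ℂ) (x y : Fin k → ℂ)
    (c s : ℝ) (e : ℂ) (hee : e * starRingEnd ℂ e = 1) (hcs : (c:ℂ)^2 + (s:ℂ)^2 = 1) :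
    sqf M ((c:ℂ) • x + ((s:ℂ) * starRingEnd ℂ e) • y)
        ((c:ℂ) • x + ((s:ℂ) * starRingEnd ℂ e) • y)
      + sqf M ((-((s:ℂ) * e)) • x + (c:ℂ) • y) ((-((s:ℂ) * e)) • x + (c:ℂ) • y)
      = sqf M x x + sqf M y y := by
  rw [sqf_comb, sqf_comb]
  simp only [_root_.map_mul, map_neg, Complex.conj_conj, Complex.conj_ofReal]
  linear_combination ((s:ℂ)^2 * (sqf M x x + sqf M y y)) * hee
    + (sqf M x x + sqf M y y) * hcs

private lemma rotate_cross {k : ℕ} (A : Matrix (Fin k) (Fin k) ℂ) (x y : Fin k → ℂ)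
    (c s r px py : ℝ) (e : ℂ) (hee : e * starRingEnd ℂ e = 1)
    (hae : sqf A x y = (r:ℂ) * e)
    (hayx : sqf A y x = (r:ℂ) * starRingEnd ℂ e)
    (hpx : sqf A x x = (px:ℂ)) (hpy : sqf A y y = (py:ℂ))
    (hzero : (c:ℂ)^2 * r - (s:ℂ)^2 * r + (c:ℂ) * s * (py - px) = 0) :
    sqf A ((c:ℂ) • x + ((s:ℂ) * starRingEnd ℂ e) • y)
        ((-((s:ℂ) * e)) • x + (c:ℂ) • y) = 0 := by
  rw [sqf_comb]
  simp only [_root_.map_mul, map_neg, Complex.conj_conj, Complex.conj_ofReal]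
  rw [hae, hayx, hpx, hpy]
  linear_combination e * hzero - (s:ℂ)^2 * (r:ℂ) * e * hee

private lemma polar (a : ℂ) : ∃ e : ℂ, e * starRingEnd ℂ e = 1 ∧ a = (‖a‖ : ℂ) * e := by
  by_cases ha : a = 0
  · exact ⟨1, by simp, by simp [ha]⟩
  · have habs : (‖a‖ : ℂ) ≠ 0 := by simpa using ha
    refine ⟨a / (‖a‖ : ℂ), ?_, by field_simp⟩
    rw [map_div₀, Complex.conj_ofReal]
    rw [div_mul_div_comm, Complex.mul_conj]
    push_cast [Complex.normSq_eq_norm_sq]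
    field_simp

private lemma unit_rotate (b : ℂ) : ∃ u : ℂ, u * starRingEnd ℂ u = 1 ∧
    u * b + starRingEnd ℂ u * starRingEnd ℂ b = 0 := by
  by_cases hb : b = 0
  · exact ⟨1, by simp, by simp [hb]⟩
  · have habs : (‖b‖ : ℂ) ≠ 0 := by
      simpa using hb
    refine ⟨Complex.I * starRingEnd ℂ b / (‖b‖ : ℂ), ?_, ?_⟩
    · rw [map_div₀, _root_.map_mul, Complex.conj_I, Complex.conj_conj, Complex.conj_ofReal]
      field_simp
      have : -(Complex.I * starRingEnd ℂ b * (Complex.I * b)) = b * starRingEnd ℂ b := by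
        ring_nf
        rw [Complex.I_sq]
        ring
      rw [Complex.I_sq]
      have hmc := Complex.mul_conj b
      rw [Complex.normSq_eq_norm_sq] at hmc
      push_cast at hmc
      linear_combination hmc
    · rw [map_div₀, _root_.map_mul, Complex.conj_I, Complex.conj_conj, Complex.conj_ofReal]
      field_simp
      ring

private lemma exists_angle (r m : ℝ) : ∃ θ : ℝ, r * Real.cos θ + m * Real.sin θ = 0 := by
  by_cases h : (⟨-m, r⟩ : ℂ) = 0
  · rw [Complex.ext_iff] at h
    simp only [Complex.zero_re, Complex.zero_im] at h
    obtain ⟨hm, hr⟩ := h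
    refine ⟨0, by simp [hr, show m = 0 by linarith]⟩
  · refine ⟨Complex.arg (⟨-m, r⟩ : ℂ), ?_⟩
    rw [Complex.cos_arg h, Complex.sin_arg]
    simp only [Complex.norm_def]
    have hne : √(normSq (⟨-m, r⟩ : ℂ)) ≠ 0 := by
      rw [← Complex.norm_def]; exact norm_ne_zero_iff.mpr h
    field_simp
    ring

private lemma sqf_add_exists {k : ℕ} {A B : Matrix (Fin k) (Fin k) ℂ}
    (hA : A.IsHermitian) (hB : B.IsHermitian) (x y : Fin k → ℂ) :
    ∃ z : Fin k → ℂ, sqf A z z = sqf A x x + sqf A y y ∧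
      sqf B z z = sqf B x x + sqf B y y := by
  obtain ⟨e, hee, hae⟩ := polar (sqf A x y)
  set r : ℝ := ‖sqf A x y‖ with hr_def
  set px : ℝ := (sqf A x x).re
  set py : ℝ := (sqf A y y).re
  have hpx : sqf A x x = (px : ℂ) := (Complex.conj_eq_iff_re.mp (sqf_conj hA x x)).symm
  have hpy : sqf A y y = (py : ℂ) := (Complex.conj_eq_iff_re.mp (sqf_conj hA y y)).symm
  have hayx : sqf A y x = (r:ℂ) * starRingEnd ℂ e := by
    rw [← sqf_conj hA x y, hae]
    rw [_root_.map_mul, Complex.conj_ofReal]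
  obtain ⟨θ, hθ⟩ := exists_angle r ((py - px)/2)
  set c : ℝ := Real.cos (θ/2) with hc_def
  set s : ℝ := Real.sin (θ/2) with hs_def
  have hcs : (c:ℂ)^2 + (s:ℂ)^2 = 1 := by
    norm_cast
    rw [hc_def, hs_def, add_comm]
    exact Real.sin_sq_add_cos_sq (θ/2)
  have hzero : (c:ℂ)^2 * r - (s:ℂ)^2 * r + (c:ℂ) * s * (py - px) = 0 := by
    have h0 : Real.sin (θ/2)^2 + Real.cos (θ/2)^2 = 1 := Real.sin_sq_add_cos_sq _
    have h1 : Real.cos θ = c^2 - s^2 := by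
      have := Real.cos_two_mul (θ/2)
      rw [show 2 * (θ/2) = θ by ring] at this
      rw [hc_def, hs_def]
      rw [this]
      nlinarith [h0]
    have h2 : Real.sin θ = 2 * s * c := by
      have := Real.sin_two_mul (θ/2)
      rw [show 2 * (θ/2) = θ by ring] at this
      rw [hc_def, hs_def, this]
    have : c^2 * r - s^2 * r + c * s * (py - px) = 0 := by
      rw [h1, h2] at hθ
      nlinarith [hθ]
    have hC := congrArg (fun t : ℝ => (t : ℂ)) this
    push_cast at hC
    linear_combination hC
  -- rotated pair
  set x' : Fin k → ℂ := (c:ℂ) • x + ((s:ℂ) * starRingEnd ℂ e) • y with hx'_def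
  set y' : Fin k → ℂ := (-((s:ℂ) * e)) • x + (c:ℂ) • y with hy'_def
  have hsumA : sqf A x' x' + sqf A y' y' = sqf A x x + sqf A y y :=
    rotate_sum A x y c s e hee hcs
  have hsumB : sqf B x' x' + sqf B y' y' = sqf B x x + sqf B y y :=
    rotate_sum B x y c s e hee hcs
  have hcross : sqf A x' y' = 0 :=
    rotate_cross A x y c s r px py e hee hae hayx hpx hpy hzero
  have hcross' : sqf A y' x' = 0 := by
    rw [← sqf_conj hA x' y', hcross, map_zero]
  obtain ⟨u, huu, hub⟩ := unit_rotate (sqf B x' y')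
  have hbyx : sqf B y' x' = starRingEnd ℂ (sqf B x' y') := (sqf_conj hB x' y').symm
  refine ⟨(1:ℂ) • x' + u • y', ?_, ?_⟩
  · rw [sqf_comb, hcross, hcross']
    simp only [_root_.map_one, one_mul, mul_one, mul_zero, zero_mul, add_zero, zero_add]
    linear_combination hsumA + sqf A y' y' * huu
  · rw [sqf_comb, hbyx]
    simp only [_root_.map_one, one_mul, mul_one]
    linear_combination hsumB + sqf B y' y' * huu + hub

private lemma sqf_smul {k : ℕ} (M : Matrix (Fin k) (Fin k) ℂ) (c : ℂ) (z : Fin k → ℂ) :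
    sqf M (c • z) (c • z) = starRingEnd ℂ c * c * sqf M z z := by
  simp [sqf, mulVec_smul, dotProduct_smul, star_smul, smul_dotProduct, smul_eq_mul]
  ring

private lemma sqf_sqrt_smul {k : ℕ} (M : Matrix (Fin k) (Fin k) ℂ) {t : ℝ} (ht : 0 ≤ t)
    (z : Fin k → ℂ) :
    sqf M ((Real.sqrt t : ℂ) • z) ((Real.sqrt t : ℂ) • z) = (t : ℂ) * sqf M z z := by
  rw [sqf_smul, Complex.conj_ofReal]
  norm_cast
  rw [Real.mul_self_sqrt ht]

private lemma sqf_zero {k : ℕ} (M : Matrix (Fin k) (Fin k) ℂ) :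
    sqf M (0 : Fin k → ℂ) 0 = 0 := by
  simp [sqf]

/-- Lossless complex S-procedure with one constraint: under the Slater condition
`∃ y₀, y₀ᴴ F₁ y₀ > 0`, the implication `yᴴF₁y ≥ 0 → yᴴF₀y ≥ 0` (for all `y`) holds iff
`∃ τ ≥ 0, F₀ - τ F₁ ⪰ 0`. -/
theorem stmt_16 (k : ℕ) (F₀ F₁ : Matrix (Fin k) (Fin k) ℂ)
    (hF₀ : F₀.IsHermitian) (hF₁ : F₁.IsHermitian)
    (hSlater : ∃ y₀ : Fin k → ℂ, 0 < (star y₀ ⬝ᵥ (F₁ *ᵥ y₀)).re) :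
    (∀ y : Fin k → ℂ, 0 ≤ (star y ⬝ᵥ (F₁ *ᵥ y)).re → 0 ≤ (star y ⬝ᵥ (F₀ *ᵥ y)).re)
    ↔ ∃ τ : ℝ, 0 ≤ τ ∧ (F₀ - (τ : ℂ) • F₁).PosSemidef := by
  have hval : ∀ (τ : ℝ) (z : Fin k → ℂ),
      star z ⬝ᵥ ((F₀ - (τ:ℂ) • F₁) *ᵥ z) = sqf F₀ z z - (τ:ℂ) * sqf F₁ z z := by
    intro τ z
    simp [sqf, sub_mulVec, smul_mulVec, dotProduct_sub, dotProduct_smul, smul_eq_mul]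
  constructor
  · -- forward
    intro himp
    set v : (Fin k → ℂ) → ℝ × ℝ := fun z => ((sqf F₁ z z).re, (sqf F₀ z z).re) with hv_def
    set C : Set (ℝ × ℝ) := Set.range v with hC_def
    have hCc : Convex ℝ C := by
      rintro p ⟨z₁, rfl⟩ q ⟨z₂, rfl⟩ a b ha hb hab
      obtain ⟨z₃, h₁, h₀⟩ := sqf_add_exists hF₁ hF₀ ((Real.sqrt a : ℂ) • z₁)
        ((Real.sqrt b : ℂ) • z₂)
      rw [sqf_sqrt_smul _ ha, sqf_sqrt_smul _ hb] at h₁ h₀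
      refine ⟨z₃, ?_⟩
      have e₁ := congrArg Complex.re h₁
      have e₀ := congrArg Complex.re h₀
      simp only [Complex.add_re, Complex.re_ofReal_mul] at e₁ e₀
      ext
      · simpa using e₁
      · simpa using e₀
    set D : Set (ℝ × ℝ) := Set.Ioi (0:ℝ) ×ˢ Set.Iio (0:ℝ) with hD_def
    have hDo : IsOpen D := isOpen_Ioi.prod isOpen_Iio
    have hDc : Convex ℝ D := (convex_Ioi 0).prod (convex_Iio 0)
    have hdisj : Disjoint D C := by
      rw [Set.disjoint_right]
      rintro p ⟨z, rfl⟩ hpD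
      obtain ⟨h1, h2⟩ := hpD
      exact absurd (himp z (le_of_lt h1)) (not_le.mpr h2)
    obtain ⟨f, u, hfD, hfC⟩ := geometric_hahn_banach_open hDc hDo hCc hdisj
    have hu0 : u ≤ 0 := by
      have := hfC (v 0) ⟨0, rfl⟩
      simpa [hv_def, sqf_zero, Prod.mk_zero_zero] using this
    have hscale : ∀ (t : ℝ), 0 ≤ t → ∀ z, v ((Real.sqrt t : ℂ) • z) = t • v z := by
      intro t ht z
      simp only [hv_def, sqf_sqrt_smul _ ht, Complex.re_ofReal_mul, Prod.smul_mk,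
        smul_eq_mul]
    have hfC' : ∀ z : Fin k → ℂ, 0 ≤ f (v z) := by
      intro z
      by_contra hneg
      push_neg at hneg
      set w : ℝ := f (v z) with hw
      have hwneg : w < 0 := hneg
      have ht : 0 ≤ (u - 1) / w := by
        rw [div_nonneg_iff]
        right
        constructor <;> linarith
      have := hfC (v ((Real.sqrt ((u-1)/w) : ℂ) • z)) ⟨_, rfl⟩
      rw [hscale _ ht] at this
      rw [f.map_smul, smul_eq_mul, ← hw] at this
      rw [div_mul_cancel₀ _ (ne_of_lt hwneg)] at this
      linarith
    set α : ℝ := f (1, 0) with hα_def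
    set β : ℝ := f (0, 1) with hβ_def
    have hf_eval : ∀ p : ℝ × ℝ, f p = p.1 * α + p.2 * β := by
      intro p
      have hp : p = p.1 • ((1:ℝ), (0:ℝ)) + p.2 • ((0:ℝ), (1:ℝ)) := by
        ext <;> simp
      rw [hp, f.map_add, f.map_smul, f.map_smul, smul_eq_mul, smul_eq_mul]
      simp [hα_def, hβ_def]
    have hcl : ∀ p : ℝ × ℝ, 0 ≤ p.1 → p.2 ≤ 0 → f p ≤ u := by
      intro p hp1 hp2
      have hsub : D ⊆ f ⁻¹' (Set.Iic u) := fun q hq => le_of_lt (hfD q hq)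
      have hclosed : IsClosed (f ⁻¹' (Set.Iic u)) := isClosed_Iic.preimage f.continuous
      have hmem : p ∈ closure D := by
        rw [hD_def, closure_prod_eq, closure_Ioi, closure_Iio]
        exact ⟨hp1, hp2⟩
      exact (closure_minimal hsub hclosed) hmem
    have hαle : α ≤ 0 := le_trans (by simpa [hα_def] using hcl (1, 0) (by norm_num) le_rfl) hu0
    have hβge : 0 ≤ β := by
      have := hcl (0, -1) le_rfl (by norm_num)
      rw [hf_eval] at this
      simp only at this
      nlinarith [hu0]
    have hαβ : α - β < 0 := by
      have := hfD ((1:ℝ), (-1:ℝ)) (by constructor <;> norm_num)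
      rw [hf_eval] at this
      simp only at this
      nlinarith [hu0]
    have key : ∀ z : Fin k → ℂ, 0 ≤ (sqf F₁ z z).re * α + (sqf F₀ z z).re * β := by
      intro z
      have := hfC' z
      rwa [hf_eval] at this
    have hβpos : 0 < β := by
      rcases lt_or_eq_of_le hβge with h | h
      · exact h
      · exfalso
        obtain ⟨y₀, hy₀⟩ := hSlater
        have hk := key y₀
        rw [← h, mul_zero, add_zero] at hk
        have hq : (sqf F₁ y₀ y₀).re = (star y₀ ⬝ᵥ (F₁ *ᵥ y₀)).re := rfl
        have hαneg : α < 0 := by linarith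
        nlinarith [hk, hy₀, hq]
    refine ⟨-α/β, div_nonneg (neg_nonneg.mpr hαle) hβpos.le, ?_⟩
    rw [posSemidef_iff_dotProduct_mulVec]; constructor
    · rw [Matrix.IsHermitian, Matrix.conjTranspose_sub, Matrix.conjTranspose_smul,
        hF₀.eq, hF₁.eq, Complex.star_def, Complex.conj_ofReal]
    · intro z
      rw [hval]
      have hherm : (sqf F₀ z z - ((-α/β : ℝ):ℂ) * sqf F₁ z z).re
          = (sqf F₀ z z).re - (-α/β) * (sqf F₁ z z).re := by
        rw [Complex.sub_re, Complex.re_ofReal_mul]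
      have hre : 0 ≤ (sqf F₀ z z).re - (-α/β) * (sqf F₁ z z).re := by
        have := key z
        rw [div_mul_eq_mul_div, le_sub_iff_add_le, zero_add, div_le_iff₀ hβpos]
        nlinarith [key z]
      have hrealval : (sqf F₀ z z - ((-α/β : ℝ):ℂ) * sqf F₁ z z)
          = (((sqf F₀ z z).re - (-α/β) * (sqf F₁ z z).re : ℝ) : ℂ) := by
        rw [← hherm]
        symm
        rw [← Complex.conj_eq_iff_re]
        rw [map_sub, _root_.map_mul, Complex.conj_ofReal, sqf_conj hF₀, sqf_conj hF₁]
      rw [hrealval]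
      exact_mod_cast hre
  · -- backward
    rintro ⟨τ, hτ, hPSD⟩ y hy
    have h2 := hPSD.dotProduct_mulVec_nonneg y
    rw [hval] at h2
    have hre : 0 ≤ (sqf F₀ y y - (τ:ℂ) * sqf F₁ y y).re := by
      rw [Complex.le_def] at h2
      simpa using h2.1
    rw [Complex.sub_re, Complex.re_ofReal_mul] at hre
    have hq : (sqf F₁ y y).re = (star y ⬝ᵥ (F₁ *ᵥ y)).re := rfl
    have hq0 : (sqf F₀ y y).re = (star y ⬝ᵥ (F₀ *ᵥ y)).re := rfl
    rw [hq, hq0] at hre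
    nlinarith [mul_nonneg hτ hy]
end
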